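/- For every real q ∈ (0,1) there exists a natural number m such that for all n ≥ 2m+2 the polynomial S_n(q,x) = Σ_{k=0}^n q^{k^2} x^k has at most 2m+2 non-real complex roots counted with multiplicity (equivalently, at least n − 2m − 2 of its roots are real). -/

import Mathlib

open Polynomial
open scoped Classical

open Complex Real


noncomputable def thTerm (q : ℝ) (n : ℤ) : ℝ := (-1 : ℝ) ^ n * q ^ (n ^ 2)

lemma zpow_sq_eq {q : ℝ} (hq0 : 0 < q) (n : ℤ) : q ^ (n ^ 2) = q ^ (n.natAbs ^ 2) := by
  rw [← zpow_natCast]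
  congr 1
  push_cast
  exact (_root_.sq_abs n).symm

lemma natAbs_cast_sq (n : ℤ) : ((n.natAbs : ℝ)) ^ 2 = ((n : ℝ)) ^ 2 := by
  rw [Nat.cast_natAbs]
  push_cast
  exact sq_abs _

lemma theta_pos {q : ℝ} (hq0 : 0 < q) (hq1 : q < 1) :
    ∃ θ : ℝ, 0 < θ ∧ HasSum (thTerm q) θ := by
  obtain ⟨t, ht, hq_eq⟩ : ∃ t : ℝ, 0 < t ∧ q = Real.exp (-(π * t)) := by
    refine ⟨-Real.log q / π, div_pos (by simpa using Real.log_neg hq0 hq1) Real.pi_pos, ?_⟩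
    rw [neg_div, mul_neg, mul_div_cancel₀ _ (ne_of_gt Real.pi_pos), neg_neg, Real.exp_log hq0]
  have hπ : (0:ℝ) < π := Real.pi_pos
  have ht' : t ≠ 0 := ne_of_gt ht
  have htc : (t:ℂ) ≠ 0 := by exact_mod_cast ht'
  have hne : ((t:ℂ) * I) ≠ 0 := by simp [Complex.ext_iff, ht']
  have hτ : (0:ℝ) < ((t : ℂ) * I).im := by simp [ht]
  have hterm : ∀ n : ℤ, jacobiTheta₂_term n (1/2) ((t:ℂ) * I) = ((thTerm q n : ℝ) : ℂ) := by
    intro n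
    rw [jacobiTheta₂_term]
    have h1 : 2 * (π:ℂ) * I * n * (1/2) + (π:ℂ) * I * n ^ 2 * ((t:ℂ) * I)
        = n * ((π:ℂ) * I) + ((-(π * t) * (n : ℝ)^2 : ℝ) : ℂ) := by
      push_cast
      linear_combination ((π:ℂ) * (n:ℂ)^2 * t) * Complex.I_sq
    rw [h1, Complex.exp_add, Complex.exp_int_mul, Complex.exp_pi_mul_I,
      ← Complex.ofReal_exp]
    have h2 : Real.exp (-(π * t) * (n:ℝ)^2) = q ^ ((n:ℤ) ^ 2) := by
      rw [zpow_sq_eq hq0, hq_eq, ← Real.exp_nat_mul, ← natAbs_cast_sq n]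
      push_cast
      ring_nf
    rw [h2, thTerm]
    push_cast
    ring
  have hHS : HasSum (fun n : ℤ => ((thTerm q n : ℝ) : ℂ)) (jacobiTheta₂ (1/2) ((t:ℂ)*I)) :=
    (hasSum_jacobiTheta₂_term (1/2) hτ).congr_fun fun n => (hterm n).symm
  have hfe := jacobiTheta₂_functional_equation (1/2) ((t:ℂ)*I)
  -- factor 1
  have hf1 : 1 / (-I * ((t:ℂ)*I)) ^ (1/2 : ℂ) = ((1 / t ^ (1/2 : ℝ) : ℝ) : ℂ) := by
    have e1 : -I * ((t:ℂ)*I) = (t:ℂ) := by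
      rw [mul_comm (t:ℂ) I, ← mul_assoc]
      simp [Complex.I_mul_I]
    have e2 : ((1:ℂ)/2) = ((1/2 : ℝ) : ℂ) := by norm_num
    rw [e1, e2, ← Complex.ofReal_cpow ht.le]
    push_cast
    ring
  have hf1pos : (0:ℝ) < 1 / t ^ (1/2 : ℝ) := by positivity
  -- factor 2
  have hf2 : cexp (-π * I * (1/2) ^ 2 / ((t:ℂ)*I)) = ((Real.exp (-(π/(4*t))) : ℝ) : ℂ) := by
    have h3 : -(π:ℂ) * I * (1/2) ^ 2 / ((t:ℂ)*I) = ((-(π/(4*t)) : ℝ) : ℂ) := by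
      rw [div_eq_iff hne]
      push_cast
      field_simp [htc]
      ring
    rw [h3, Complex.ofReal_exp]
  have hf2pos : (0:ℝ) < Real.exp (-(π/(4*t))) := Real.exp_pos _
  -- factor 3
  have hτeq : -1 / ((t:ℂ)*I) = ((t⁻¹ : ℝ) : ℂ) * I := by
    rw [div_eq_iff hne]
    push_cast
    field_simp [htc]
    linear_combination (-1:ℂ) * Complex.I_mul_I
  have hτ' : (0:ℝ) < (-1 / ((t:ℂ)*I)).im := by
    rw [hτeq]
    simpa using inv_pos.mpr ht
  have hterm3 : ∀ n : ℤ, jacobiTheta₂_term n ((1/2) / ((t:ℂ)*I)) (-1 / ((t:ℂ)*I))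
      = ((Real.exp (π * n / t - π * n^2 / t) : ℝ) : ℂ) := by
    intro n
    rw [jacobiTheta₂_term, Complex.ofReal_exp]
    congr 1
    push_cast
    field_simp [htc]
    ring
  have hHS3 : HasSum (fun n : ℤ => ((Real.exp (π * n / t - π * n^2 / t) : ℝ) : ℂ))
      (jacobiTheta₂ ((1/2) / ((t:ℂ)*I)) (-1 / ((t:ℂ)*I))) :=
    (hasSum_jacobiTheta₂_term _ hτ').congr_fun fun n => (hterm3 n).symm
  have hsum3 : Summable (fun n : ℤ => Real.exp (π * n / t - π * n^2 / t)) :=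
    Complex.summable_ofReal.mp hHS3.summable
  set c3 : ℝ := ∑' n : ℤ, Real.exp (π * n / t - π * n^2 / t) with hc3
  have hc3pos : 0 < c3 := by
    apply Summable.tsum_pos hsum3 (fun i => (Real.exp_pos _).le) 0
    simp
  have h3eq : jacobiTheta₂ ((1/2) / ((t:ℂ)*I)) (-1 / ((t:ℂ)*I)) = ((c3 : ℝ) : ℂ) := by
    rw [← hHS3.tsum_eq, hc3, Complex.ofReal_tsum]
  refine ⟨(1 / t ^ (1/2 : ℝ)) * Real.exp (-(π/(4*t))) * c3, by positivity, ?_⟩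
  apply Complex.hasSum_ofReal.mp
  convert hHS using 1
  rw [hfe, hf1, hf2, h3eq]
  push_cast
  ring

lemma exists_good_m {q : ℝ} (hq0 : 0 < q) (hq1 : q < 1) :
    ∃ m : ℕ, 1 ≤ m ∧
      2 * q ^ (m+1) / (1 - q) < ∑ i ∈ Finset.Icc (-(m:ℤ)) m, thTerm q i := by
  obtain ⟨θ, hθpos, hθ⟩ := theta_pos hq0 hq1
  have hmono : Monotone (fun m : ℕ => Finset.Icc (-(m:ℤ)) (m:ℤ)) := by
    intro a b hab
    apply Finset.Icc_subset_Icc <;> omega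
  have hcov : ∀ x : ℤ, ∃ n : ℕ, x ∈ Finset.Icc (-(n:ℤ)) (n:ℤ) := by
    intro x
    exact ⟨x.natAbs, by rw [Finset.mem_Icc]; omega⟩
  have htend : Filter.Tendsto (fun m : ℕ => ∑ i ∈ Finset.Icc (-(m:ℤ)) (m:ℤ), thTerm q i)
      Filter.atTop (nhds θ) :=
    hθ.comp (Filter.tendsto_atTop_finset_of_monotone hmono hcov)
  have htend2 : Filter.Tendsto (fun m : ℕ => 2 * q ^ (m+1) / (1 - q))
      Filter.atTop (nhds 0) := by
    have h := tendsto_pow_atTop_nhds_zero_of_lt_one hq0.le hq1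
    have h2 : Filter.Tendsto (fun m : ℕ => q ^ (m+1)) Filter.atTop (nhds 0) :=
      h.comp (Filter.tendsto_add_atTop_nat 1)
    simpa using (h2.const_mul 2).div_const (1 - q)
  have hdiff : Filter.Tendsto
      (fun m : ℕ => (∑ i ∈ Finset.Icc (-(m:ℤ)) (m:ℤ), thTerm q i) - 2 * q ^ (m+1) / (1 - q))
      Filter.atTop (nhds θ) := by
    simpa using htend.sub htend2
  have hev : ∀ᶠ m : ℕ in Filter.atTop, 0 <
      (∑ i ∈ Finset.Icc (-(m:ℤ)) (m:ℤ), thTerm q i) - 2 * q ^ (m+1) / (1 - q) :=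
    hdiff.eventually_const_lt hθpos
  obtain ⟨m, hm1, hm2⟩ := (Filter.eventually_ge_atTop 1).and hev |>.exists
  exact ⟨m, hm1, by linarith⟩

lemma geom_tail_bound {q : ℝ} (hq0 : 0 < q) (hq1 : q < 1) (m : ℕ) (U : Finset ℕ)
    (hU : ∀ l ∈ U, m + 1 ≤ l) : ∑ l ∈ U, q ^ l ≤ q ^ (m+1) / (1 - q) := by
  have hinj : Set.InjOn (fun l => l - (m+1)) U := by
    intro a ha b hb hab
    have := hU a ha; have := hU b hb
    simp only at hab
    omega
  have h1 : ∑ l ∈ U, q ^ l = ∑ d ∈ U.image (fun l => l - (m+1)), q ^ (m+1) * q ^ d := by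
    rw [Finset.sum_image hinj]
    apply Finset.sum_congr rfl
    intro l hl
    rw [← pow_add]
    congr 1
    have := hU l hl
    omega
  rw [h1, ← Finset.mul_sum]
  rw [div_eq_mul_inv]
  apply mul_le_mul_of_nonneg_left _ (by positivity)
  calc ∑ d ∈ U.image (fun l => l - (m+1)), q ^ d
      ≤ ∑' d : ℕ, q ^ d := by
        exact Summable.sum_le_tsum _ (fun i _ => by positivity) (summable_geometric_of_lt_one hq0.le hq1)
    _ = (1 - q)⁻¹ := tsum_geometric_of_lt_one hq0.le hq1

lemma tail_bound {q : ℝ} (hq0 : 0 < q) (hq1 : q < 1) (m : ℕ) (T : Finset ℤ)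
    (hT : ∀ i ∈ T, m + 1 ≤ i.natAbs) :
    |∑ i ∈ T, thTerm q i| ≤ 2 * q ^ (m+1) / (1 - q) := by
  have habs : ∀ i ∈ T, |thTerm q i| ≤ q ^ i.natAbs := by
    intro i hi
    have h1 : |(-1:ℝ) ^ i| = 1 := by
      rcases Int.even_or_odd i with h | h
      · rw [h.neg_one_zpow]; norm_num
      · rw [h.neg_one_zpow]; norm_num
    rw [thTerm, abs_mul, h1, one_mul, abs_of_pos (zpow_pos hq0 _), zpow_sq_eq hq0]
    exact pow_le_pow_of_le_one hq0.le hq1.le (Nat.le_self_pow (by omega) _)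
  calc |∑ i ∈ T, thTerm q i| ≤ ∑ i ∈ T, q ^ i.natAbs := by
        refine (Finset.abs_sum_le_sum_abs _ _).trans (Finset.sum_le_sum habs)
    _ ≤ 2 * q ^ (m+1) / (1 - q) := by
        have key : ∀ S : Finset ℤ, S ⊆ T → Set.InjOn Int.natAbs S →
            ∑ i ∈ S, q ^ i.natAbs ≤ q ^ (m+1) / (1 - q) := by
          intro S hS hinj
          rw [← Finset.sum_image hinj]
          apply geom_tail_bound hq0 hq1
          intro l hl
          rw [Finset.mem_image] at hl
          obtain ⟨i, hi, rfl⟩ := hl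
          exact hT i (hS hi)
        have hsplit : T = T.filter (fun i => 0 ≤ i) ∪ T.filter (fun i => ¬ 0 ≤ i) :=
          (Finset.filter_union_filter_not_eq _ T).symm
        nth_rewrite 1 [hsplit]
        rw [Finset.sum_union (Finset.disjoint_filter_filter_not _ _ _)]
        have b1 := key (T.filter (fun i => 0 ≤ i)) (Finset.filter_subset _ _) (by
          intro a ha b hb hab
          simp only [Finset.coe_filter, Set.mem_setOf_eq] at ha hb
          omega)
        have b2 := key (T.filter (fun i => ¬ 0 ≤ i)) (Finset.filter_subset _ _) (by
          intro a ha b hb hab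
          simp only [Finset.coe_filter, Set.mem_setOf_eq] at ha hb
          omega)
        calc ∑ i ∈ T.filter (fun i => 0 ≤ i), q ^ i.natAbs
              + ∑ i ∈ T.filter (fun i => ¬ 0 ≤ i), q ^ i.natAbs
            ≤ q ^ (m+1) / (1 - q) + q ^ (m+1) / (1 - q) := add_le_add b1 b2
          _ = 2 * q ^ (m+1) / (1 - q) := by ring

lemma neg_one_zpow_natAbs (i : ℤ) : ((-1:ℝ)) ^ i = (-1:ℝ) ^ i.natAbs := by
  rcases Int.even_or_odd i with h | h
  · rw [h.neg_one_zpow, (Int.natAbs_even.mpr h).neg_one_pow]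
  · rw [h.neg_one_zpow, (Int.natAbs_odd.mpr h).neg_one_pow]

lemma key_term {q : ℝ} (hq0 : 0 < q) (j k : ℕ) :
    (-1:ℝ)^j * q^(j^2) * (q^(k^2) * (-(q^(2*j))⁻¹)^k) = thTerm q ((k:ℤ) - j) := by
  have hqne : q ≠ 0 := ne_of_gt hq0
  rw [thTerm, zpow_sq_eq hq0, neg_one_zpow_natAbs]
  rw [neg_pow ((q^(2*j))⁻¹), inv_pow, ← pow_mul]
  rcases le_or_gt j k with h | h
  · obtain ⟨d, rfl⟩ : ∃ d, k = j + d := ⟨k - j, by omega⟩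
    have hab : (((j:ℤ) + d) - j).natAbs = d := by
      push_cast
      omega
    push_cast
    rw [hab]
    field_simp
    have hs : (-1:ℝ)^j * (-1:ℝ)^(j+d) = (-1:ℝ)^d := by
      rw [← pow_add, show j + (j + d) = d + 2*j by ring, pow_add, pow_mul]
      norm_num
    calc (-1:ℝ)^j * q^(j^2) * q^((j+d)^2) * (-1:ℝ)^(j+d)
        = ((-1:ℝ)^j * (-1:ℝ)^(j+d)) * (q^(j^2) * q^((j+d)^2)) := by ring
      _ = (-1:ℝ)^d * q^(d^2) * q^(2*j*(j+d)) := by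
          rw [hs, ← pow_add, mul_assoc, ← pow_add]
          congr 2
          ring
      _ = q^(2*j*(j+d)) * (-1:ℝ)^d * q^(d^2) := by ring
  · obtain ⟨e, he, rfl⟩ : ∃ e, 0 < e ∧ j = k + e := ⟨j - k, by omega, by omega⟩
    have hab : ((k:ℤ) - (k + e)).natAbs = e := by
      push_cast
      omega
    push_cast
    rw [hab]
    field_simp
    have hs : (-1:ℝ)^(k+e) * (-1:ℝ)^k = (-1:ℝ)^e := by
      rw [← pow_add, show k + e + k = e + 2*k by ring, pow_add, pow_mul]
      norm_num
    calc (-1:ℝ)^(k+e) * q^((k+e)^2) * q^(k^2) * (-1:ℝ)^k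
        = ((-1:ℝ)^(k+e) * (-1:ℝ)^k) * (q^((k+e)^2) * q^(k^2)) := by ring
      _ = (-1:ℝ)^e * q^(e^2) * q^(2*(k+e)*k) := by
          rw [hs, ← pow_add, mul_assoc, ← pow_add]
          congr 2
          ring
      _ = q^(2*(k+e)*k) * (-1:ℝ)^e * q^(e^2) := by ring

lemma sign_eval {q : ℝ} (hq0 : 0 < q) (hq1 : q < 1) {m j n : ℕ}
    (hm : 2 * q ^ (m+1) / (1-q) < ∑ i ∈ Finset.Icc (-(m:ℤ)) m, thTerm q i)
    (hjm : m ≤ j) (hjn : j + m ≤ n) :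
    0 < (-1:ℝ)^j * q^(j^2) * Polynomial.eval (-(q^(2*j))⁻¹)
      (∑ k ∈ Finset.range (n+1), Polynomial.C (q^(k^2)) * Polynomial.X^k) := by
  have heval : Polynomial.eval (-(q^(2*j))⁻¹)
      (∑ k ∈ Finset.range (n+1), Polynomial.C (q^(k^2)) * Polynomial.X^k)
      = ∑ k ∈ Finset.range (n+1), q^(k^2) * (-(q^(2*j))⁻¹)^k := by
    rw [Polynomial.eval_finset_sum]
    simp
  rw [heval, Finset.mul_sum]
  have hrw : ∀ k ∈ Finset.range (n+1),
      (-1:ℝ)^j * q^(j^2) * (q^(k^2) * (-(q^(2*j))⁻¹)^k) = thTerm q ((k:ℤ) - j) :=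
    fun k _ => key_term hq0 j k
  rw [Finset.sum_congr rfl hrw]
  -- reindex
  have hinjE : Function.Injective (fun k : ℕ => (k:ℤ) - j) := by
    intro a b h; simp only at h; omega
  have hmap : (Finset.range (n+1)).map
      ⟨fun k : ℕ => (k:ℤ) - j, hinjE⟩ = Finset.Icc (-(j:ℤ)) ((n:ℤ) - j) := by
    ext i
    simp only [Finset.mem_map, Finset.mem_range, Finset.mem_Icc, Function.Embedding.coeFn_mk]
    constructor
    · rintro ⟨a, ha, rfl⟩
      omega
    · intro hi
      exact ⟨(i + j).toNat, by omega, by omega⟩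
  have hre : ∑ k ∈ Finset.range (n+1), thTerm q ((k:ℤ) - j)
      = ∑ i ∈ Finset.Icc (-(j:ℤ)) ((n:ℤ) - j), thTerm q i := by
    rw [← hmap, Finset.sum_map]
    simp
  rw [hre]
  have hsub : Finset.Icc (-(m:ℤ)) (m:ℤ) ⊆ Finset.Icc (-(j:ℤ)) ((n:ℤ) - j) := by
    apply Finset.Icc_subset_Icc <;> omega
  rw [← Finset.sum_sdiff hsub]
  have htail := tail_bound hq0 hq1 m (Finset.Icc (-(j:ℤ)) ((n:ℤ) - j) \ Finset.Icc (-(m:ℤ)) (m:ℤ))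
    (by
      intro i hi
      rw [Finset.mem_sdiff, Finset.mem_Icc, Finset.mem_Icc] at hi
      omega)
  have h1 := neg_abs_le (∑ i ∈ Finset.Icc (-(j:ℤ)) ((n:ℤ) - j) \ Finset.Icc (-(m:ℤ)) (m:ℤ), thTerm q i)
  linarith [abs_nonneg (∑ i ∈ Finset.Icc (-(j:ℤ)) ((n:ℤ) - j) \ Finset.Icc (-(m:ℤ)) (m:ℤ), thTerm q i)]

/-- For every `q ∈ (0,1)` there is `m` such that for all `n ≥ 2m+2` the section
`S_n(q,x) = Σ_{k=0}^n q^{k²} x^k` has at most `2m+2` non-real roots counted with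
multiplicity. -/
theorem stmt16 (q : ℝ) (hq : q ∈ Set.Ioo (0 : ℝ) 1) :
    ∃ m : ℕ, ∀ n : ℕ, 2 * m + 2 ≤ n →
      (((∑ k ∈ Finset.range (n + 1),
            Polynomial.C ((q : ℂ) ^ (k ^ 2)) * Polynomial.X ^ k).roots.filter
          (fun z : ℂ => z.im ≠ 0)).card ≤ 2 * m + 2) := by
  classical
  obtain ⟨hq0, hq1⟩ := hq
  obtain ⟨m, hm1, hm⟩ := exists_good_m hq0 hq1
  refine ⟨m, fun n hn => ?_⟩
  set P : Polynomial ℝ := ∑ k ∈ Finset.range (n+1), Polynomial.C (q^(k^2)) * Polynomial.X^k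
    with hP
  set Pc : Polynomial ℂ := ∑ k ∈ Finset.range (n + 1),
      Polynomial.C ((q : ℂ) ^ (k ^ 2)) * Polynomial.X ^ k with hPc
  have hmap : Pc = P.map (algebraMap ℝ ℂ) := by
    rw [hP, hPc, Polynomial.map_sum]
    apply Finset.sum_congr rfl
    intro k _
    rw [Polynomial.map_mul, Polynomial.map_C, Polynomial.map_pow, Polynomial.map_X]
    push_cast
    rfl
  -- degree
  have hcoeffn : Pc.coeff n = (q:ℂ)^(n^2) := by
    rw [hPc, Polynomial.finset_sum_coeff]
    simp only [Polynomial.coeff_C_mul, Polynomial.coeff_X_pow]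
    rw [Finset.sum_eq_single n]
    · simp
    · intro k _ hk
      simp [Ne.symm hk]
    · intro h
      exact absurd (Finset.self_mem_range_succ n) h
  have hq0c : (q:ℂ) ^ (n^2) ≠ 0 := by
    apply pow_ne_zero
    exact_mod_cast ne_of_gt hq0
  have hPc0 : Pc ≠ 0 := fun h => hq0c (by rw [← hcoeffn, h, Polynomial.coeff_zero])
  have hdegle : Pc.natDegree ≤ n := by
    apply Polynomial.natDegree_sum_le_of_forall_le
    intro k hk
    refine (Polynomial.natDegree_C_mul_le _ _).trans ?_
    simpa using Nat.lt_succ_iff.mp (Finset.mem_range.mp hk)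
  have hdeg : Pc.natDegree = n :=
    le_antisymm hdegle (Polynomial.le_natDegree_of_ne_zero (by rw [hcoeffn]; exact hq0c))
  have hcard : Multiset.card Pc.roots = n := by
    rw [← hdeg]
    exact Polynomial.splits_iff_card_roots.mp (IsAlgClosed.splits Pc)
  -- real roots via sign changes
  set X : ℕ → ℝ := fun j => -(q^(2*j))⁻¹ with hX
  have hXanti : StrictAnti X := by
    apply strictAnti_nat_of_succ_lt
    intro j
    rw [hX]
    simp only [neg_lt_neg_iff]
    apply inv_strictAnti₀ (pow_pos hq0 _)
    apply pow_lt_pow_right_of_lt_one₀ hq0 hq1  -- name?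
    omega
  have hsign : ∀ j : ℕ, m ≤ j → j + m ≤ n →
      0 < (-1:ℝ)^j * q^(j^2) * Polynomial.eval (X j) P :=
    fun j h1 h2 => sign_eval hq0 hq1 hm h1 h2
  have hroot : ∀ j : ℕ, m ≤ j → j + 1 + m ≤ n → ∃ r ∈ Set.Ioo (X (j+1)) (X j),
      Polynomial.eval r P = 0 := by
    intro j h1 h2
    have s1 := hsign j h1 (by omega)
    have s2 := hsign (j+1) (by omega) (by omega)
    have hcont : ContinuousOn (fun x => Polynomial.eval x P) (Set.Icc (X (j+1)) (X j)) :=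
      (Polynomial.continuous P).continuousOn
    have hle : X (j+1) ≤ X j := (hXanti (by omega : j < j + 1)).le
    have hqj : (0:ℝ) < q^(j^2) := pow_pos hq0 _
    have hqj1 : (0:ℝ) < q^((j+1)^2) := pow_pos hq0 _
    rcases Nat.even_or_odd j with he | ho
    · have e1 : (0:ℝ) < Polynomial.eval (X j) P := by
        rw [he.neg_one_pow] at s1
        nlinarith
      have e2 : Polynomial.eval (X (j+1)) P < 0 := by
        rw [(he.add_one).neg_one_pow] at s2
        nlinarith
      have := intermediate_value_Ioo hle hcont
      have h0 : (0:ℝ) ∈ Set.Ioo (Polynomial.eval (X (j+1)) P) (Polynomial.eval (X j) P) :=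
        ⟨e2, e1⟩
      obtain ⟨r, hr, hr0⟩ := this h0
      exact ⟨r, hr, hr0⟩
    · have e1 : Polynomial.eval (X j) P < 0 := by
        rw [ho.neg_one_pow] at s1
        nlinarith
      have e2 : (0:ℝ) < Polynomial.eval (X (j+1)) P := by
        rw [(Odd.add_one ho).neg_one_pow] at s2
        nlinarith
      have := intermediate_value_Ioo' hle hcont
      have h0 : (0:ℝ) ∈ Set.Ioo (Polynomial.eval (X j) P) (Polynomial.eval (X (j+1)) P) :=
        ⟨e1, e2⟩
      obtain ⟨r, hr, hr0⟩ := this h0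
      exact ⟨r, hr, hr0⟩
  -- choose real roots
  have hroot' : ∀ j : ℕ, ∃ r : ℝ, (m ≤ j ∧ j + 1 + m ≤ n) →
      r ∈ Set.Ioo (X (j+1)) (X j) ∧ Polynomial.eval r P = 0 := by
    intro j
    by_cases h : m ≤ j ∧ j + 1 + m ≤ n
    · obtain ⟨r, h1, h2⟩ := hroot j h.1 h.2
      exact ⟨r, fun _ => ⟨h1, h2⟩⟩
    · exact ⟨0, fun hc => absurd hc h⟩
  choose r hr using hroot'
  have hrmem : ∀ j ∈ Finset.Ico m (n - m),
      r j ∈ Set.Ioo (X (j+1)) (X j) ∧ Polynomial.eval (r j) P = 0 := by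
    intro j hj
    rw [Finset.mem_Ico] at hj
    exact hr j ⟨hj.1, by omega⟩
  have hlt : ∀ a b : ℕ, a ∈ Finset.Ico m (n-m) → b ∈ Finset.Ico m (n-m) → a < b →
      r b < r a := by
    intro a b ha hb hab
    have h1 := (hrmem a ha).1
    have h2 := (hrmem b hb).1
    have h3 : X b ≤ X (a+1) := hXanti.antitone (by omega)
    have h4 := h2.2
    have h5 := h1.1
    linarith
  have hinj : Set.InjOn (fun j : ℕ => ((r j : ℝ) : ℂ)) (Finset.Ico m (n-m)) := by
    intro a ha b hb hab
    simp only [Complex.ofReal_inj] at hab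
    by_contra hne
    rcases Nat.lt_or_ge a b with h | h
    · exact absurd hab (ne_of_gt (hlt a b ha hb h))
    · have h' : b < a := by omega
      exact absurd hab (ne_of_lt (hlt b a hb ha h'))
  set S : Finset ℂ := (Finset.Ico m (n-m)).image (fun j : ℕ => ((r j : ℝ) : ℂ)) with hS
  have hScard : S.card = n - m - m := by
    rw [hS, Finset.card_image_of_injOn hinj, Nat.card_Ico]
  have hSsub : S.val ≤ Pc.roots.filter (fun z => ¬ z.im ≠ 0) := by
    apply Multiset.le_iff_count.mpr
    intro a
    by_cases haS : a ∈ S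
    · rw [Multiset.count_eq_one_of_mem S.nodup haS]
      apply Multiset.one_le_count_iff_mem.mpr
      rw [Multiset.mem_filter]
      obtain ⟨j, hj, rfl⟩ := Finset.mem_image.mp haS
      constructor
      · rw [Polynomial.mem_roots hPc0]
        rw [hmap, Polynomial.IsRoot, Polynomial.eval_map,
          show ((r j : ℝ) : ℂ) = algebraMap ℝ ℂ (r j) from rfl, Polynomial.eval₂_at_apply,
          (hrmem j hj).2]
        simp
      · simp
    · rw [Multiset.count_eq_zero_of_notMem (by simpa using haS)]
      exact Nat.zero_le _
  have hc2 : n - m - m ≤ Multiset.card (Pc.roots.filter (fun z => ¬ z.im ≠ 0)) := by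
    have := Multiset.card_le_card hSsub
    rwa [← hScard]
  have hsplit : Multiset.card (Pc.roots.filter (fun z : ℂ => z.im ≠ 0))
      + Multiset.card (Pc.roots.filter (fun z => ¬ z.im ≠ 0)) = n := by
    rw [← Multiset.card_add, Multiset.filter_add_not, hcard]
  omega
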